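/- The standard teleportation channel is invariant under Bell-diagonal twirling of the resource state: for any qubit state σ and two-qubit resource state ρ, Λ^tel_ρ(σ) = Λ^tel_{B(ρ)}(σ), where Λ^tel_ρ(σ) := ∑_{i,j∈{0,1}} (Z^j X^i) ⟨Ψ_ij|_{CA} (σ_C ⊗ ρ_{AB}) |Ψ_ij⟩_{CA} (Z^j X^i)†. -/

import Mathlib

open Matrix Kronecker BigOperators ComplexOrder

set_option maxHeartbeats 1000000

noncomputable section

def PX : Matrix (Fin 2) (Fin 2) ℂ := !![0, 1; 1, 0]
def PY : Matrix (Fin 2) (Fin 2) ℂ := !![0, -Complex.I; Complex.I, 0]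
def PZ : Matrix (Fin 2) (Fin 2) ℂ := !![1, 0; 0, -1]
def bell00 : Fin 2 × Fin 2 → ℂ := fun p => if p.1 = p.2 then ((1 / Real.sqrt 2 : ℝ) : ℂ) else 0
def bell (i j : Fin 2) : Fin 2 × Fin 2 → ℂ :=
  (((1 : Matrix (Fin 2) (Fin 2) ℂ) ⊗ₖ (PX ^ (i : ℕ) * PZ ^ (j : ℕ)))).mulVec bell00
def braket2 {n : Type*} [Fintype n] (φ : n → ℂ) (M : Matrix n n ℂ) (ψ : n → ℂ) : ℂ :=
  star φ ⬝ᵥ M.mulVec ψ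
def IsDensity {n : Type*} [Fintype n] (ρ : Matrix n n ℂ) : Prop :=
  ρ.PosSemidef ∧ ρ.trace = 1
def twirl (ρ : Matrix (Fin 2 × Fin 2) (Fin 2 × Fin 2) ℂ) :
    Matrix (Fin 2 × Fin 2) (Fin 2 × Fin 2) ℂ :=
  (1 / 4 : ℂ) • (ρ + (PX ⊗ₖ PX) * ρ * (PX ⊗ₖ PX)ᴴ + (PY ⊗ₖ PY) * ρ * (PY ⊗ₖ PY)ᴴ
    + (PZ ⊗ₖ PZ) * ρ * (PZ ⊗ₖ PZ)ᴴ)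
def bproj (i j : Fin 2) : Matrix (Fin 2 × Fin 2) (Fin 2 × Fin 2) ℂ :=
  vecMulVec (bell i j) (star (bell i j))
def pbk (ψ : Fin 2 × Fin 2 → ℂ)
    (M : Matrix (Fin 2 × (Fin 2 × Fin 2)) (Fin 2 × (Fin 2 × Fin 2)) ℂ) :
    Matrix (Fin 2) (Fin 2) ℂ :=
  fun b b' => ∑ c, ∑ a, ∑ c', ∑ a',
    star (ψ (c, a)) * M (c, (a, b)) (c', (a', b')) * ψ (c', a')
def telChan (ρ : Matrix (Fin 2 × Fin 2) (Fin 2 × Fin 2) ℂ) (σ : Matrix (Fin 2) (Fin 2) ℂ) :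
    Matrix (Fin 2) (Fin 2) ℂ :=
  ∑ i : Fin 2, ∑ j : Fin 2,
    (PZ ^ (j : ℕ) * PX ^ (i : ℕ)) * pbk (bell i j) (σ ⊗ₖ ρ) * (PZ ^ (j : ℕ) * PX ^ (i : ℕ))ᴴ

/-- sign function -/
def zc (p : Fin 2 × Fin 2) : ℂ := if p.1 = p.2 then 1 else -1
/-- bit-flip on both components -/
def fl (p : Fin 2 × Fin 2) : Fin 2 × Fin 2 := (p.1 + 1, p.2 + 1)


lemma cX_apply (ρ : Matrix (Fin 2 × Fin 2) (Fin 2 × Fin 2) ℂ) (p q : Fin 2 × Fin 2) :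
    ((PX ⊗ₖ PX) * ρ * (PX ⊗ₖ PX)ᴴ) p q = ρ (fl p) (fl q) := by
  obtain ⟨p1, p2⟩ := p
  obtain ⟨q1, q2⟩ := q
  fin_cases p1 <;> fin_cases p2 <;> fin_cases q1 <;> fin_cases q2 <;>
    simp [PX, fl, Matrix.mul_apply, Fintype.sum_prod_type, Fin.sum_univ_two,
      Matrix.conjTranspose_apply]

lemma cY_apply (ρ : Matrix (Fin 2 × Fin 2) (Fin 2 × Fin 2) ℂ) (p q : Fin 2 × Fin 2) :
    ((PY ⊗ₖ PY) * ρ * (PY ⊗ₖ PY)ᴴ) p q = zc p * zc q * ρ (fl p) (fl q) := by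
  obtain ⟨p1, p2⟩ := p
  obtain ⟨q1, q2⟩ := q
  fin_cases p1 <;> fin_cases p2 <;> fin_cases q1 <;> fin_cases q2 <;>
    · simp [PY, fl, zc, Matrix.mul_apply, Fintype.sum_prod_type, Fin.sum_univ_two,
        Matrix.conjTranspose_apply]
      try ring

lemma cZ_apply (ρ : Matrix (Fin 2 × Fin 2) (Fin 2 × Fin 2) ℂ) (p q : Fin 2 × Fin 2) :
    ((PZ ⊗ₖ PZ) * ρ * (PZ ⊗ₖ PZ)ᴴ) p q = zc p * zc q * ρ p q := by
  obtain ⟨p1, p2⟩ := p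
  obtain ⟨q1, q2⟩ := q
  fin_cases p1 <;> fin_cases p2 <;> fin_cases q1 <;> fin_cases q2 <;>
    · simp [PZ, zc, Matrix.mul_apply, Fintype.sum_prod_type, Fin.sum_univ_two,
        Matrix.conjTranspose_apply]
      try ring

lemma bell_apply (i j c a : Fin 2) :
    bell i j (c, a) = (PX ^ (i : ℕ) * PZ ^ (j : ℕ)) a c * ((1 / Real.sqrt 2 : ℝ) : ℂ) := by
  fin_cases c <;> fin_cases a <;>
    simp [bell, bell00, Matrix.mulVec, dotProduct, Fintype.sum_prod_type,
      Fin.sum_univ_two, Matrix.one_apply]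

lemma PX_herm : PXᴴ = PX := by
  ext a b
  fin_cases a <;> fin_cases b <;> simp [PX, Matrix.conjTranspose_apply]

lemma PZ_herm : PZᴴ = PZ := by
  ext a b
  fin_cases a <;> fin_cases b <;> simp [PZ, Matrix.conjTranspose_apply]

lemma powX (i : Fin 2) : PX ^ (i : ℕ) * PX = PX ^ (((i + 1) : Fin 2) : ℕ) := by
  fin_cases i <;>
    · ext a b
      fin_cases a <;> fin_cases b <;>
        simp [PX, Matrix.mul_apply, Fin.sum_univ_two]

lemma powVZ (i j : Fin 2) : PZ ^ (j : ℕ) * PX ^ (i : ℕ) * PZ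
    = ((-1 : ℂ) ^ (i : ℕ)) • (PZ ^ (((j + 1) : Fin 2) : ℕ) * PX ^ (i : ℕ)) := by
  fin_cases i <;> fin_cases j <;>
    · ext a b
      fin_cases a <;> fin_cases b <;>
        simp [PX, PZ, Matrix.mul_apply, Fin.sum_univ_two]

lemma pbkX (i j : Fin 2) (σ : Matrix (Fin 2) (Fin 2) ℂ)
    (ρ : Matrix (Fin 2 × Fin 2) (Fin 2 × Fin 2) ℂ) :
    pbk (bell i j) (σ ⊗ₖ (fun p q => ρ (fl p) (fl q)))
      = PX * pbk (bell (i + 1) j) (σ ⊗ₖ ρ) * PX := by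
  ext b b'
  fin_cases i <;> fin_cases j <;> fin_cases b <;> fin_cases b' <;>
    · simp only [pbk, bell_apply, Matrix.one_apply, Matrix.mul_apply, Matrix.kroneckerMap_apply, Matrix.kroneckerMap,
        Fin.sum_univ_two, Fin.isValue, Fin.val_zero, Fin.val_one, pow_zero, pow_one,
        Matrix.one_mul, Matrix.mul_one, PX, PZ, fl,
        Matrix.cons_val', Matrix.cons_val_zero, Matrix.cons_val_one, Matrix.head_cons,
        Matrix.empty_val', Matrix.cons_val_fin_one, Matrix.head_fin_const, Matrix.of_apply,
        Fin.reduceEq, Fin.reduceAdd, Fin.zero_eta, Fin.mk_one, zero_ne_one, one_ne_zero,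
        if_true, if_false, reduceIte, star_one, star_zero, star_neg, star_mul',
        RCLike.star_def, Complex.conj_ofReal, _root_.map_one, _root_.map_zero, _root_.map_neg, one_mul, mul_one,
        zero_mul, mul_zero, add_zero, zero_add, neg_mul, mul_neg, neg_neg, neg_zero]
      try ring

lemma pbkZ (i j : Fin 2) (σ : Matrix (Fin 2) (Fin 2) ℂ)
    (ρ : Matrix (Fin 2 × Fin 2) (Fin 2 × Fin 2) ℂ) :
    pbk (bell i j) (σ ⊗ₖ (fun p q => zc p * zc q * ρ p q))
      = PZ * pbk (bell i (j + 1)) (σ ⊗ₖ ρ) * PZ := by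
  ext b b'
  fin_cases i <;> fin_cases j <;> fin_cases b <;> fin_cases b' <;>
    · simp only [pbk, bell_apply, Matrix.one_apply, Matrix.mul_apply, Matrix.kroneckerMap_apply, Matrix.kroneckerMap,
        Fin.sum_univ_two, Fin.isValue, Fin.val_zero, Fin.val_one, pow_zero, pow_one,
        Matrix.one_mul, Matrix.mul_one, PX, PZ, zc,
        Matrix.cons_val', Matrix.cons_val_zero, Matrix.cons_val_one, Matrix.head_cons,
        Matrix.empty_val', Matrix.cons_val_fin_one, Matrix.head_fin_const, Matrix.of_apply,
        Fin.reduceEq, Fin.reduceAdd, Fin.zero_eta, Fin.mk_one, zero_ne_one, one_ne_zero,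
        if_true, if_false, reduceIte, star_one, star_zero, star_neg, star_mul',
        RCLike.star_def, Complex.conj_ofReal, one_mul, mul_one, zero_mul, mul_zero,
        add_zero, zero_add, neg_mul, mul_neg, neg_neg, neg_zero, Prod.mk.injEq,
        _root_.map_one, _root_.map_zero, _root_.map_neg]
      try ring

lemma pbk_add (ψ : Fin 2 × Fin 2 → ℂ)
    (M N : Matrix (Fin 2 × (Fin 2 × Fin 2)) (Fin 2 × (Fin 2 × Fin 2)) ℂ) :
    pbk ψ (M + N) = pbk ψ M + pbk ψ N := by
  ext b b'
  simp [pbk, Matrix.add_apply, mul_add, add_mul, Finset.sum_add_distrib]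

lemma pbk_smul (c : ℂ) (ψ : Fin 2 × Fin 2 → ℂ)
    (M : Matrix (Fin 2 × (Fin 2 × Fin 2)) (Fin 2 × (Fin 2 × Fin 2)) ℂ) :
    pbk ψ (c • M) = c • pbk ψ M := by
  ext b b'
  simp only [pbk, Matrix.smul_apply, smul_eq_mul, Finset.mul_sum]
  simp [mul_assoc, mul_left_comm]

lemma telChan_add (A B : Matrix (Fin 2 × Fin 2) (Fin 2 × Fin 2) ℂ)
    (σ : Matrix (Fin 2) (Fin 2) ℂ) :
    telChan (A + B) σ = telChan A σ + telChan B σ := by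
  simp [telChan, Matrix.kronecker_add, pbk_add, Matrix.mul_add, Matrix.add_mul,
    Finset.sum_add_distrib]

lemma telChan_smul (c : ℂ) (A : Matrix (Fin 2 × Fin 2) (Fin 2 × Fin 2) ℂ)
    (σ : Matrix (Fin 2) (Fin 2) ℂ) :
    telChan (c • A) σ = c • telChan A σ := by
  simp [telChan, Matrix.kronecker_smul, pbk_smul, Matrix.mul_smul, Matrix.smul_mul,
    Finset.smul_sum]

lemma conj_sandwich (V M P : Matrix (Fin 2) (Fin 2) ℂ) (hM : Mᴴ = M) :
    V * (M * P * M) * Vᴴ = (V * M) * P * (V * M)ᴴ := by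
  rw [Matrix.conjTranspose_mul, hM]
  simp only [Matrix.mul_assoc]

lemma smul_sandwich (c : ℂ) (W P : Matrix (Fin 2) (Fin 2) ℂ) :
    (c • W) * P * (c • W)ᴴ = (c * star c) • (W * P * Wᴴ) := by
  rw [Matrix.conjTranspose_smul, Matrix.smul_mul, Matrix.mul_smul, Matrix.smul_mul,
    smul_smul, mul_comm (star c) c]

lemma sum_shift (F : Fin 2 → Matrix (Fin 2) (Fin 2) ℂ) :
    ∑ i : Fin 2, F (i + 1) = ∑ i : Fin 2, F i := by
  rw [Fin.sum_univ_two, Fin.sum_univ_two, show ((0 : Fin 2) + 1) = 1 by decide,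
    show ((1 : Fin 2) + 1) = 0 by decide, add_comm]

lemma telChan_congr_X (ρ ρ' : Matrix (Fin 2 × Fin 2) (Fin 2 × Fin 2) ℂ)
    (h : ∀ p q, ρ' p q = ρ (fl p) (fl q)) (σ : Matrix (Fin 2) (Fin 2) ℂ) :
    telChan ρ' σ = telChan ρ σ := by
  have hρ' : ρ' = (fun p q => ρ (fl p) (fl q)) := by
    funext p q; exact h p q
  subst hρ'
  have key : ∀ i j : Fin 2,
      (PZ ^ (j : ℕ) * PX ^ (i : ℕ)) * pbk (bell i j) (σ ⊗ₖ (fun p q => ρ (fl p) (fl q)))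
          * (PZ ^ (j : ℕ) * PX ^ (i : ℕ))ᴴ
        = (PZ ^ (j : ℕ) * PX ^ (((i + 1) : Fin 2) : ℕ)) * pbk (bell (i + 1) j) (σ ⊗ₖ ρ)
          * (PZ ^ (j : ℕ) * PX ^ (((i + 1) : Fin 2) : ℕ))ᴴ := by
    intro i j
    rw [pbkX, conj_sandwich _ _ _ PX_herm,
      show PZ ^ (j : ℕ) * PX ^ (i : ℕ) * PX = PZ ^ (j : ℕ) * PX ^ (((i + 1) : Fin 2) : ℕ) by
        rw [mul_assoc, powX]]
  unfold telChan
  simp only [key]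
  exact sum_shift (fun i => ∑ j : Fin 2,
    (PZ ^ (j : ℕ) * PX ^ (i : ℕ)) * pbk (bell i j) (σ ⊗ₖ ρ) * (PZ ^ (j : ℕ) * PX ^ (i : ℕ))ᴴ)

lemma telChan_congr_Z (ρ ρ' : Matrix (Fin 2 × Fin 2) (Fin 2 × Fin 2) ℂ)
    (h : ∀ p q, ρ' p q = zc p * zc q * ρ p q) (σ : Matrix (Fin 2) (Fin 2) ℂ) :
    telChan ρ' σ = telChan ρ σ := by
  have hρ' : ρ' = (fun p q => zc p * zc q * ρ p q) := by
    funext p q; exact h p q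
  subst hρ'
  have key : ∀ i j : Fin 2,
      (PZ ^ (j : ℕ) * PX ^ (i : ℕ)) * pbk (bell i j) (σ ⊗ₖ (fun p q => zc p * zc q * ρ p q))
          * (PZ ^ (j : ℕ) * PX ^ (i : ℕ))ᴴ
        = (PZ ^ (((j + 1) : Fin 2) : ℕ) * PX ^ (i : ℕ)) * pbk (bell i (j + 1)) (σ ⊗ₖ ρ)
          * (PZ ^ (((j + 1) : Fin 2) : ℕ) * PX ^ (i : ℕ))ᴴ := by
    intro i j
    rw [pbkZ, conj_sandwich _ _ _ PZ_herm, powVZ, smul_sandwich]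
    have hc : ((-1 : ℂ) ^ (i : ℕ)) * star ((-1 : ℂ) ^ (i : ℕ)) = 1 := by
      simp only [star_pow, star_neg, star_one, ← pow_add]
      exact Even.neg_one_pow (Even.add_self (i : ℕ))
    rw [hc, one_smul]
  unfold telChan
  simp only [key]
  refine Finset.sum_congr rfl fun i _ => ?_
  exact sum_shift (fun j =>
    (PZ ^ (j : ℕ) * PX ^ (i : ℕ)) * pbk (bell i j) (σ ⊗ₖ ρ) * (PZ ^ (j : ℕ) * PX ^ (i : ℕ))ᴴ)

theorem telChan_twirl_invariant (σ : Matrix (Fin 2) (Fin 2) ℂ) (hσ : IsDensity σ)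
    (ρ : Matrix (Fin 2 × Fin 2) (Fin 2 × Fin 2) ℂ) (hρ : IsDensity ρ) :
    telChan ρ σ = telChan (twirl ρ) σ := by
  have hX : telChan ((PX ⊗ₖ PX) * ρ * (PX ⊗ₖ PX)ᴴ) σ = telChan ρ σ :=
    telChan_congr_X ρ _ (cX_apply ρ) σ
  have hZ : telChan ((PZ ⊗ₖ PZ) * ρ * (PZ ⊗ₖ PZ)ᴴ) σ = telChan ρ σ :=
    telChan_congr_Z ρ _ (cZ_apply ρ) σ
  have hY : telChan ((PY ⊗ₖ PY) * ρ * (PY ⊗ₖ PY)ᴴ) σ = telChan ρ σ := by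
    have h1 : telChan ((PY ⊗ₖ PY) * ρ * (PY ⊗ₖ PY)ᴴ) σ
        = telChan (fun p q => ρ (fl p) (fl q)) σ :=
      telChan_congr_Z _ _ (fun p q => cY_apply ρ p q) σ
    rw [h1, telChan_congr_X ρ _ (fun _ _ => rfl) σ]
  rw [twirl, telChan_smul, telChan_add, telChan_add, telChan_add, hX, hY, hZ]
  ext i j
  simp only [Matrix.smul_apply, Matrix.add_apply, smul_eq_mul]
  ring
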